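/- For a rooted binary phylogenetic network N on X with inheritance probabilities and |T(N)| equal to 2^k (k the number of reticulation nodes), for every S ⊆ X the inheritance-weighted phylogenetic net diversity equals the inheritance-weighted average embedded phylogenetic diversity: PND^inh(S) = Σ_{T∈T(N)} P(T)·PD_T(S). -/

import Mathlib

open Finset
open scoped Classical

/-- `IsPath E u v p` : `p` is a list of consecutive edges of `E` leading from `u` to `v`. -/
def IsPath {V : Type*} (E : Finset (V × V)) : V → V → List (V × V) → Prop
  | u, v, [] => u = v
  | u, v, e :: p => e ∈ E ∧ e.1 = u ∧ IsPath E e.2 v p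

/-- The vertex `u` lies on the path `p` starting at the vertex `a`. -/
def MemPath {V : Type*} (u a : V) (p : List (V × V)) : Prop :=
  u = a ∨ ∃ e ∈ p, e.2 = u

/-- indegree of a vertex. -/
def inDeg {V : Type*} [DecidableEq V] (E : Finset (V × V)) (v : V) : ℕ :=
  (E.filter fun e => e.2 = v).card

/-- outdegree of a vertex. -/
def outDeg {V : Type*} [DecidableEq V] (E : Finset (V × V)) (v : V) : ℕ :=
  (E.filter fun e => e.1 = v).card

/-- All lists of length `n` with entries in `s`. -/
def listsOf {V : Type*} [DecidableEq V] (s : Finset (V × V)) : ℕ → Finset (List (V × V))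
  | 0 => {[]}
  | n + 1 => s.biUnion fun e => (listsOf s n).image (e :: ·)

/-- The (finite) set of all directed paths from `u` to `v` in an acyclic digraph. -/
noncomputable def allPaths {V : Type*} [Fintype V] [DecidableEq V]
    (E : Finset (V × V)) (u v : V) : Finset (List (V × V)) :=
  ((Finset.range (Fintype.card V + 1)).biUnion (listsOf E)).filter (IsPath E u v)

/-- A rooted binary phylogenetic network on the taxon set `X`, with vertex set `V`,
edge lengths and inheritance probabilities. -/
structure PhyloNetwork (V X : Type*) [Fintype V] [DecidableEq V] [Fintype X] where
  E : Finset (V × V)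
  root : V
  len : V × V → ℝ
  prob : V × V → ℝ
  leafOf : X → V
  leafOf_inj : Function.Injective leafOf
  root_in : inDeg E root = 0
  root_out : outDeg E root = 2
  leaf_iff : ∀ v, outDeg E v = 0 ↔ ∃ x, leafOf x = v
  leaf_in : ∀ x, inDeg E (leafOf x) = 1
  internal : ∀ v, v ≠ root → outDeg E v ≠ 0 →
      (inDeg E v = 1 ∧ outDeg E v = 2) ∨ (inDeg E v = 2 ∧ outDeg E v = 1)
  reach : ∀ v, ∃ p, IsPath E root v p
  acyclic : ∀ (v : V) (p : List (V × V)), p ≠ [] → ¬ IsPath E v v p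
  len_nonneg : ∀ e ∈ E, 0 ≤ len e
  len_pos_tree : ∀ e ∈ E, inDeg E e.2 ≤ 1 → 0 < len e
  len_retic : ∀ e ∈ E, inDeg E e.2 = 2 → len e = 0
  prob_tree : ∀ e ∈ E, inDeg E e.2 ≤ 1 → prob e = 1
  prob_pos : ∀ e ∈ E, 0 < prob e
  prob_lt_one : ∀ e ∈ E, inDeg E e.2 = 2 → prob e < 1
  prob_sum : ∀ v, inDeg E v = 2 → ∑ e ∈ E.filter (fun e => e.2 = v), prob e = 1

namespace PhyloNetwork

variable {V X : Type*} [Fintype V] [DecidableEq V] [Fintype X] [DecidableEq X]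
variable (N : PhyloNetwork V X)

/-- Probability of a directed path: the product of the probabilities of its edges. -/
noncomputable def pathProb (p : List (V × V)) : ℝ := (p.map N.prob).prod

/-- Total weight (sum of branch lengths) of a set of edges. -/
noncomputable def weight (A : Finset (V × V)) : ℝ := ∑ e ∈ A, N.len e

/-- A switching keeps exactly one incoming edge of every non-root vertex, i.e. it
deletes exactly one of the two incoming reticulation edges of each reticulation node
and keeps all tree edges. -/
def IsSwitching (F : Finset (V × V)) : Prop :=
  F ⊆ N.E ∧ ∀ v, v ≠ N.root → (F.filter fun e => e.2 = v).card = 1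

/-- The switching yields a phylogenetic `X`-tree: every dead end is a labeled leaf. -/
def IsValidSwitching (F : Finset (V × V)) : Prop :=
  N.IsSwitching F ∧ ∀ v, outDeg F v = 0 → ∃ x, N.leafOf x = v

/-- The (multi)set `T(N)` of phylogenetic `X`-trees displayed by `N`, each tree being
encoded by the switching producing it. -/
noncomputable def displayed : Finset (Finset (V × V)) :=
  N.E.powerset.filter N.IsValidSwitching

/-- The set of leaves lying below the edge `e` inside the subgraph `F`. -/
noncomputable def clusterIn (F : Finset (V × V)) (e : V × V) : Finset X :=
  Finset.univ.filter fun x => ∃ p, IsPath F e.2 (N.leafOf x) p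

/-- Phylogenetic diversity of `S` in the tree displayed by the switching `F`
(the sum of the lengths of the edges of the minimal subtree spanning `S` and the root;
suppression of degree-two vertices merges edge lengths additively, so it is computed
on the unsuppressed switching). -/
noncomputable def PDdisp (F : Finset (V × V)) (S : Finset X) : ℝ :=
  ∑ e ∈ F.filter (fun e => (N.clusterIn F e ∩ S).Nonempty), N.len e

/-- Unscaled probability of the tree displayed by the switching `F`: the product of the
inheritance probabilities of the kept reticulation edges. -/
noncomputable def Punsc (F : Finset (V × V)) : ℝ :=
  ∏ e ∈ F.filter (fun e => inDeg N.E e.2 = 2), N.prob e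

/-- `v` is a vertex of the edge set `A`. -/
def vertexOf (A : Finset (V × V)) (v : V) : Prop := ∃ e ∈ A, e.1 = v ∨ e.2 = v

/-- `A` is an arborescence rooted at the root of `N` inside `N`: there is exactly one
directed path from the root to each of its vertices. -/
def IsArbor (A : Finset (V × V)) : Prop :=
  A ⊆ N.E ∧ ∀ v, vertexOf A v → (allPaths A N.root v).card = 1

/-- `A` contains all taxa of `S`. -/
def spans (A : Finset (V × V)) (S : Finset X) : Prop :=
  ∀ x ∈ S, vertexOf A (N.leafOf x)

/-- Phylogenetic net diversity: the weight of a minimum cost arborescence containing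
`S` and the root. -/
noncomputable def PND (S : Finset X) : ℝ :=
  sInf {w : ℝ | ∃ A, N.IsArbor A ∧ N.spans A S ∧ w = N.weight A}

/-- Phylogenetic subnet diversity: the total weight of the subgraph of `N` consisting of
all edges lying on some directed path from the root to a leaf of `S`. -/
noncomputable def PSD (S : Finset X) : ℝ :=
  ∑ e ∈ N.E.filter (fun e => ∃ x ∈ S, ∃ p, IsPath N.E N.root (N.leafOf x) p ∧ e ∈ p), N.len e

/-- Probability that the leaf `d` is a descendant of the node `v`: the sum of the
probabilities of all directed paths from `v` to `d`. -/
noncomputable def Pdesc (v : V) (d : X) : ℝ :=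
  ∑ p ∈ allPaths N.E v (N.leafOf d), N.pathProb p

/-- The set of leaves that are descendants of the edge `e`. -/
noncomputable def De (e : V × V) : Finset X :=
  Finset.univ.filter fun x => ∃ p, IsPath N.E e.2 (N.leafOf x) p

/-- Net Fair Proportion Index of the taxon `a`. -/
noncomputable def NFP (a : X) : ℝ :=
  ∑ p ∈ allPaths N.E N.root (N.leafOf a),
    N.pathProb p * (p.map (fun e => N.len e / ∑ d ∈ N.De e, N.Pdesc e.2 d)).sum

end PhyloNetwork

/-- The original Shapley Value of a set function `f` (with `f ∅ = 0`). -/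
noncomputable def shapley {X : Type*} [Fintype X] [DecidableEq X]
    (f : Finset X → ℝ) (a : X) : ℝ :=
  (1 / (Nat.factorial (Fintype.card X) : ℝ)) *
    ∑ S ∈ Finset.univ.powerset.filter (fun S : Finset X => a ∈ S),
      ((S.card - 1).factorial : ℝ) * ((Fintype.card X - S.card).factorial : ℝ) *
        (f S - f (S.erase a))

/-- The set of arborescences of `N` rooted at the root, containing all taxa of `S` and
whose dead ends are all leaves labeled by taxa of `S` (the arborescences spanning `S`
and the root). -/
noncomputable def PhyloNetwork.arborsSpanning {V X : Type*} [Fintype V] [DecidableEq V] [Fintype X] [DecidableEq X]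
    (N : PhyloNetwork V X) (S : Finset X) : Finset (Finset (V × V)) :=
  N.E.powerset.filter fun A => N.IsArbor A ∧ N.spans A S ∧
    ∀ v, PhyloNetwork.vertexOf A v → outDeg A v = 0 → ∃ x ∈ S, N.leafOf x = v


section PathLemmas
variable {V : Type*}

@[simp] lemma isPath_nil {E : Finset (V × V)} {u v : V} : IsPath E u v [] ↔ u = v := Iff.rfl

@[simp] lemma isPath_cons {E : Finset (V × V)} {u v : V} {e : V × V} {p : List (V × V)} :
    IsPath E u v (e :: p) ↔ e ∈ E ∧ e.1 = u ∧ IsPath E e.2 v p := Iff.rfl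

lemma isPath_mono {E F : Finset (V × V)} (h : E ⊆ F) {v : V} :
    ∀ {u : V} {p : List (V × V)}, IsPath E u v p → IsPath F u v p := by
  intro u p
  induction p generalizing u with
  | nil => exact id
  | cons e p ih => rintro ⟨he, h1, hp⟩; exact ⟨h he, h1, ih hp⟩

lemma isPath_restrict {E F : Finset (V × V)} {v : V} :
    ∀ {u : V} {p : List (V × V)}, IsPath E u v p → (∀ e ∈ p, e ∈ F) → IsPath F u v p := by
  intro u p
  induction p generalizing u with
  | nil => exact fun h _ => h
  | cons e p ih =>
      rintro ⟨he, h1, hp⟩ hmem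
      exact ⟨hmem e (List.mem_cons_self), h1, ih hp fun f hf => hmem f (List.mem_cons_of_mem _ hf)⟩

lemma isPath_append {E : Finset (V × V)} {v w : V} :
    ∀ {u : V} {p q : List (V × V)}, IsPath E u v p → IsPath E v w q → IsPath E u w (p ++ q) := by
  intro u p q hp hq
  induction p generalizing u with
  | nil => cases hp; exact hq
  | cons e p ih => obtain ⟨he, h1, hp⟩ := hp; exact ⟨he, h1, ih hp⟩

lemma isPath_concat {E : Finset (V × V)} {v : V} {e : V × V} :
    ∀ {u : V} {p : List (V × V)},
      IsPath E u v (p ++ [e]) ↔ IsPath E u e.1 p ∧ e ∈ E ∧ e.2 = v := by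
  intro u p
  induction p generalizing u with
  | nil =>
      simp only [List.nil_append, isPath_cons, isPath_nil]
      constructor
      · rintro ⟨he, h1, h2⟩; exact ⟨h1.symm, he, h2⟩
      · rintro ⟨h1, he, h2⟩; exact ⟨he, h1.symm, h2⟩
  | cons f p ih =>
      simp only [List.cons_append, isPath_cons, ih]
      tauto

lemma mem_of_isPath {E : Finset (V × V)} {v : V} {e : V × V} :
    ∀ {u : V} {p : List (V × V)}, IsPath E u v p → e ∈ p → e ∈ E := by
  intro u p
  induction p generalizing u with
  | nil => intro _ h; simp at h
  | cons f p ih =>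
      rintro ⟨hf, _, hp⟩ hm
      rcases List.mem_cons.mp hm with rfl | hm
      · exact hf
      · exact ih hp hm

lemma isPath_suffix {E : Finset (V × V)} {v : V} {e : V × V} :
    ∀ {u : V} {p : List (V × V)}, IsPath E u v p → e ∈ p → ∃ q, IsPath E e.2 v q := by
  intro u p
  induction p generalizing u with
  | nil => intro _ h; simp at h
  | cons f p ih =>
      rintro ⟨hf, h1, hp⟩ hm
      rcases List.mem_cons.mp hm with rfl | hm
      · exact ⟨p, hp⟩
      · exact ih hp hm

lemma isPath_to_mid {E : Finset (V × V)} {v w : V} :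
    ∀ {u : V} {p : List (V × V)}, IsPath E u v p → w ∈ p.map Prod.snd →
      ∃ q, q ≠ [] ∧ IsPath E u w q := by
  intro u p
  induction p generalizing u with
  | nil => intro _ h; simp at h
  | cons f p ih =>
      rintro ⟨hf, h1, hp⟩ hm
      rcases List.mem_cons.mp hm with rfl | hm
      · exact ⟨[f], by simp, ⟨hf, h1, rfl⟩⟩
      · obtain ⟨q, hq0, hq⟩ := ih hp hm
        exact ⟨f :: q, by simp, ⟨hf, h1, hq⟩⟩

lemma mem_listsOf [DecidableEq V] {s : Finset (V × V)} :
    ∀ {n : ℕ} {p : List (V × V)}, p ∈ listsOf s n ↔ p.length = n ∧ ∀ e ∈ p, e ∈ s := by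
  intro n
  induction n with
  | zero => intro p; simp [listsOf]; rintro rfl; simp
  | succ n ih =>
      intro p
      simp only [listsOf, mem_biUnion, mem_image]
      constructor
      · rintro ⟨e, he, q, hq, rfl⟩
        obtain ⟨hl, hall⟩ := ih.mp hq
        refine ⟨by simp [hl], ?_⟩
        intro f hf
        rcases List.mem_cons.mp hf with rfl | hf
        · exact he
        · exact hall f hf
      · rintro ⟨hl, hall⟩
        match p with
        | [] => simp at hl
        | e :: q =>
            refine ⟨e, hall e (List.mem_cons_self), q, ih.mpr ⟨by simpa using hl, fun f hf => hall f (List.mem_cons_of_mem _ hf)⟩, rfl⟩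

lemma mem_allPaths [Fintype V] [DecidableEq V] {E : Finset (V × V)} {u v : V}
    {p : List (V × V)} :
    p ∈ allPaths E u v ↔ IsPath E u v p ∧ p.length ≤ Fintype.card V := by
  simp only [allPaths, mem_filter, mem_biUnion, mem_range, mem_listsOf]
  constructor
  · rintro ⟨⟨n, hn, rfl, _⟩, hp⟩
    exact ⟨hp, by omega⟩
  · rintro ⟨hp, hl⟩
    exact ⟨⟨p.length, by omega, rfl, fun e he => mem_of_isPath hp he⟩, hp⟩

end PathLemmas
set_option linter.unusedSectionVars false
section MyAux
variable {V X : Type*} [Fintype V] [DecidableEq V] [Fintype X] [DecidableEq X]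
variable (N : PhyloNetwork V X)

lemma my_nodup_path {v : V} :
    ∀ {u : V} {p : List (V × V)}, IsPath N.E u v p → (u :: p.map Prod.snd).Nodup := by
  intro u p
  induction p generalizing u with
  | nil => simp
  | cons e p ih =>
      rintro ⟨he, h1, hp⟩
      have hnd := ih hp
      simp only [List.map_cons, List.nodup_cons] at hnd ⊢
      refine ⟨?_, hnd⟩
      intro hmem
      rcases List.mem_cons.mp hmem with h | h
      · -- u = e.2 : edge u→u
        exact N.acyclic u [e] (by simp) ⟨he, h1, h.symm⟩
      · -- u appears later
        obtain ⟨q, hq0, hq⟩ := isPath_to_mid hp h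
        exact N.acyclic u (e :: q) (by simp) ⟨he, h1, hq⟩

lemma my_length_path {u v : V} {p : List (V × V)} (hp : IsPath N.E u v p) :
    p.length < Fintype.card V := by
  have := (my_nodup_path N hp).length_le_card
  simpa using this

lemma my_mem_allPaths_iff {F : Finset (V × V)} (hFE : F ⊆ N.E) {u v : V} {p : List (V × V)} :
    p ∈ allPaths F u v ↔ IsPath F u v p := by
  rw [mem_allPaths]
  exact ⟨fun h => h.1, fun h => ⟨h, (my_length_path N (isPath_mono hFE h)).le⟩⟩

lemma my_transGen_path {u v : V} (h : Relation.TransGen (fun a b => (a, b) ∈ N.E) u v) :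
    ∃ p, p ≠ [] ∧ IsPath N.E u v p := by
  induction h with
  | @single b h => exact ⟨[(u, b)], by simp, ⟨h, rfl, rfl⟩⟩
  | @tail b c _ h ih =>
      obtain ⟨p, hp0, hp⟩ := ih
      exact ⟨p ++ [(b, c)], by simp, isPath_append hp ⟨h, rfl, rfl⟩⟩

lemma my_wf_pred : WellFounded (fun a b : V => (a, b) ∈ N.E) := by
  letI r : V → V → Prop := Relation.TransGen (fun a b : V => (a, b) ∈ N.E)
  haveI : IsTrans V r := ⟨fun _ _ _ => Relation.TransGen.trans⟩
  haveI : IsIrrefl V r := by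
    constructor
    intro v hv
    obtain ⟨p, hp0, hp⟩ := my_transGen_path N hv
    exact N.acyclic v p hp0 hp
  exact Subrelation.wf (r := r) (fun h => Relation.TransGen.single h)
    (Finite.wellFounded_of_trans_of_irrefl r)

lemma my_wf_succ : WellFounded (fun a b : V => (b, a) ∈ N.E) := by
  letI r : V → V → Prop := Relation.TransGen (fun a b : V => (b, a) ∈ N.E)
  haveI : IsTrans V r := ⟨fun _ _ _ => Relation.TransGen.trans⟩
  haveI : IsIrrefl V r := by
    constructor
    intro v hv
    have hv' : Relation.TransGen (fun a b : V => (a, b) ∈ N.E) v v := by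
      rw [Relation.transGen_swap]; exact hv
    obtain ⟨p, hp0, hp⟩ := my_transGen_path N hv'
    exact N.acyclic v p hp0 hp
  exact Subrelation.wf (r := r) (fun h => Relation.TransGen.single h)
    (Finite.wellFounded_of_trans_of_irrefl r)

lemma my_ne_root {e : V × V} (he : e ∈ N.E) : e.2 ≠ N.root := by
  intro h
  have : e ∈ N.E.filter fun f => f.2 = N.root := mem_filter.mpr ⟨he, h⟩
  have := card_pos.mpr ⟨e, this⟩
  rw [show (N.E.filter fun f => f.2 = N.root).card = inDeg N.E N.root from rfl, N.root_in] at this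
  omega

lemma my_indeg_cases {v : V} (hv : v ≠ N.root) :
    inDeg N.E v = 1 ∨ inDeg N.E v = 2 := by
  by_cases h0 : outDeg N.E v = 0
  · obtain ⟨x, rfl⟩ := (N.leaf_iff v).mp h0
    exact Or.inl (N.leaf_in x)
  · rcases N.internal v hv h0 with h | h
    · exact Or.inl h.1
    · exact Or.inr h.1

/-- unique incoming edges -/
def my_UIn (F : Finset (V × V)) : Prop := ∀ e ∈ F, ∀ f ∈ F, e.2 = f.2 → e = f

lemma my_sw_UIn {F : Finset (V × V)} (hF : N.IsSwitching F) : my_UIn F := by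
  intro e he f hf h2
  have hv : e.2 ≠ N.root := my_ne_root N (hF.1 he)
  have hc := hF.2 e.2 hv
  exact card_le_one.mp hc.le e (mem_filter.mpr ⟨he, rfl⟩) f (mem_filter.mpr ⟨hf, h2.symm⟩)

lemma my_no_path_to_root {p : List (V × V)} {F : Finset (V × V)} (hFE : F ⊆ N.E)
    (hp : IsPath F N.root N.root p) : p = [] := by
  by_contra h0
  exact N.acyclic N.root p h0 (isPath_mono hFE hp)

lemma my_path_unique {F : Finset (V × V)} (hFE : F ⊆ N.E) (hU : my_UIn F) :
    ∀ (n : ℕ) {p q : List (V × V)} {v : V}, p.length ≤ n →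
      IsPath F N.root v p → IsPath F N.root v q → p = q := by
  intro n
  induction n with
  | zero =>
      intro p q v hl hp hq
      have hp0 : p = [] := List.length_eq_zero_iff.mp (by omega)
      subst hp0
      cases hp
      exact (my_no_path_to_root N hFE hq).symm
  | succ n ih =>
      intro p q v hl hp hq
      rcases eq_or_ne p [] with rfl | hp0
      · cases hp
        exact (my_no_path_to_root N hFE hq).symm
      · have hvroot : v ≠ N.root := by
          rintro rfl
          exact hp0 (my_no_path_to_root N hFE hp)
        have hq0 : q ≠ [] := by
          rintro rfl
          cases hq
          exact hvroot rfl
        obtain ⟨e, p', rfl⟩ : ∃ e p', p = p' ++ [e] :=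
          ⟨p.getLast hp0, p.dropLast, (List.dropLast_append_getLast hp0).symm⟩
        obtain ⟨f, q', rfl⟩ : ∃ f q', q = q' ++ [f] :=
          ⟨q.getLast hq0, q.dropLast, (List.dropLast_append_getLast hq0).symm⟩
        obtain ⟨hp', heF, he2⟩ := isPath_concat.mp hp
        obtain ⟨hq', hfF, hf2⟩ := isPath_concat.mp hq
        have hef : e = f := hU e heF f hfF (he2.trans hf2.symm)
        subst hef
        have : p' = q' := ih (by simp at hl; omega) hp' hq'
        rw [this]

end MyAux
section MyAux2
variable {V X : Type*} [Fintype V] [DecidableEq V] [Fintype X] [DecidableEq X]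
variable (N : PhyloNetwork V X)

lemma my_sw_incoming {F : Finset (V × V)} (hF : N.IsSwitching F) {v : V} (hv : v ≠ N.root) :
    ∃ e ∈ F, e.2 = v := by
  have h1 := hF.2 v hv
  obtain ⟨e, he⟩ := card_pos.mp (h1 ▸ Nat.one_pos)
  rcases mem_filter.mp he with ⟨h1, h2⟩
  exact ⟨e, h1, h2⟩

lemma my_sw_path_exists {F : Finset (V × V)} (hF : N.IsSwitching F) (v : V) :
    ∃ p, IsPath F N.root v p := by
  induction v using (my_wf_pred N).induction with
  | _ v ih =>
      rcases eq_or_ne v N.root with rfl | hv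
      · exact ⟨[], rfl⟩
      · obtain ⟨e, heF, he2⟩ := my_sw_incoming N hF hv
        have heE : (e.1, v) ∈ N.E := by
          have := hF.1 heF
          rwa [show (e.1, v) = e by rw [← he2]] 
        obtain ⟨p, hp⟩ := ih e.1 heE
        exact ⟨p ++ [e], isPath_concat.mpr ⟨hp, heF, he2⟩⟩

lemma my_arbor_UIn {A : Finset (V × V)} (hA : N.IsArbor A) : my_UIn A := by
  intro e he f hf h2
  by_contra hne
  have hv1 : PhyloNetwork.vertexOf A e.1 := ⟨e, he, Or.inl rfl⟩
  have hv2 : PhyloNetwork.vertexOf A f.1 := ⟨f, hf, Or.inl rfl⟩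
  have hw : PhyloNetwork.vertexOf A e.2 := ⟨e, he, Or.inr rfl⟩
  obtain ⟨p, hp⟩ := card_pos.mp (by rw [hA.2 e.1 hv1]; omega)
  obtain ⟨q, hq⟩ := card_pos.mp (by rw [hA.2 f.1 hv2]; omega)
  have hpP : IsPath A N.root e.1 p := ((my_mem_allPaths_iff N hA.1).mp hp)
  have hqP : IsPath A N.root f.1 q := ((my_mem_allPaths_iff N hA.1).mp hq)
  have h1 : p ++ [e] ∈ allPaths A N.root e.2 :=
    (my_mem_allPaths_iff N hA.1).mpr (isPath_concat.mpr ⟨hpP, he, rfl⟩)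
  have h2' : q ++ [f] ∈ allPaths A N.root e.2 :=
    (my_mem_allPaths_iff N hA.1).mpr (isPath_concat.mpr ⟨hqP, hf, h2.symm⟩)
  have hnelist : p ++ [e] ≠ q ++ [f] := by
    intro h
    rw [← List.concat_eq_append, ← List.concat_eq_append] at h
    exact hne (List.concat_inj.mp h).2
  have : 1 < (allPaths A N.root e.2).card := one_lt_card.mpr ⟨_, h1, _, h2', hnelist⟩
  rw [hA.2 e.2 hw] at this
  omega

lemma my_arbor_path {A : Finset (V × V)} (hA : N.IsArbor A) {v : V}
    (hv : PhyloNetwork.vertexOf A v) : ∃ p, IsPath A N.root v p := by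
  obtain ⟨p, hp⟩ := card_pos.mp (by rw [hA.2 v hv]; omega)
  exact ⟨p, (my_mem_allPaths_iff N hA.1).mp hp⟩

lemma my_reach_leaf {A : Finset (V × V)} {S : Finset X} (hAE : A ⊆ N.E)
    (hdead : ∀ v, PhyloNetwork.vertexOf A v → outDeg A v = 0 → ∃ x ∈ S, N.leafOf x = v) :
    ∀ w, PhyloNetwork.vertexOf A w → ∃ x ∈ S, ∃ p, IsPath A w (N.leafOf x) p := by
  intro w
  induction w using (my_wf_succ N).induction with
  | _ w ih =>
      intro hw
      by_cases h0 : outDeg A w = 0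
      · obtain ⟨x, hx, hxw⟩ := hdead w hw h0
        exact ⟨x, hx, [], hxw.symm⟩
      · obtain ⟨f, hf⟩ := card_pos.mp (Nat.pos_of_ne_zero h0)
        rcases mem_filter.mp hf with ⟨hfA, hf1⟩
        have hrel : (w, f.2) ∈ N.E := by
          have := hAE hfA
          rwa [show (w, f.2) = f by rw [← hf1]]
        obtain ⟨x, hx, p, hp⟩ := ih f.2 hrel ⟨f, hfA, Or.inr rfl⟩
        exact ⟨x, hx, f :: p, ⟨hfA, hf1, hp⟩⟩

end MyAux2
section MyAux3
variable {V X : Type*} [Fintype V] [DecidableEq V] [Fintype X] [DecidableEq X]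
variable (N : PhyloNetwork V X)

noncomputable def myPhi (S : Finset X) (F : Finset (V × V)) : Finset (V × V) :=
  F.filter (fun e => (N.clusterIn F e ∩ S).Nonempty)

lemma mem_myPhi {S : Finset X} {F : Finset (V × V)} {e : V × V} :
    e ∈ myPhi N S F ↔ e ∈ F ∧ ∃ x ∈ S, ∃ p, IsPath F e.2 (N.leafOf x) p := by
  simp only [myPhi, mem_filter, PhyloNetwork.clusterIn, Finset.Nonempty, mem_inter,
    Finset.mem_filter, mem_univ, true_and]
  constructor
  · rintro ⟨hF, x, ⟨p, hp⟩, hxS⟩; exact ⟨hF, x, hxS, p, hp⟩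
  · rintro ⟨hF, x, hxS, p, hp⟩; exact ⟨hF, x, ⟨p, hp⟩, hxS⟩

lemma my_UIn_subset {F G : Finset (V × V)} (hU : my_UIn F) (h : G ⊆ F) : my_UIn G :=
  fun e he f hf h2 => hU e (h he) f (h hf) h2

lemma myPhi_path {S : Finset X} {F : Finset (V × V)} (hF : N.IsSwitching F) {e : V × V}
    (he : e ∈ myPhi N S F) :
    ∃ q, IsPath (myPhi N S F) N.root e.1 q ∧ IsPath (myPhi N S F) N.root e.2 (q ++ [e]) := by
  obtain ⟨heF, x, hxS, p, hp⟩ := (mem_myPhi N).mp he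
  obtain ⟨q, hq⟩ := my_sw_path_exists N hF e.1
  have hqe : IsPath F N.root e.2 (q ++ [e]) := isPath_concat.mpr ⟨hq, heF, rfl⟩
  have hsub : ∀ f ∈ q ++ [e], f ∈ myPhi N S F := by
    intro f hfmem
    have hfF : f ∈ F := mem_of_isPath hqe hfmem
    obtain ⟨r, hr⟩ := isPath_suffix hqe hfmem
    exact (mem_myPhi N).mpr ⟨hfF, x, hxS, r ++ p, isPath_append hr hp⟩
  exact ⟨q, isPath_restrict hq (fun f hf => hsub f (by simp [hf])), isPath_restrict hqe hsub⟩

lemma mem_arborsSpanning_iff {S : Finset X} {A : Finset (V × V)} :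
    A ∈ N.arborsSpanning S ↔ A ⊆ N.E ∧ N.IsArbor A ∧ N.spans A S ∧
      ∀ v, PhyloNetwork.vertexOf A v → outDeg A v = 0 → ∃ x ∈ S, N.leafOf x = v := by
  simp only [PhyloNetwork.arborsSpanning, mem_filter, mem_powerset, and_assoc]

lemma myPhi_arbS {S : Finset X} {F : Finset (V × V)} (hF : N.IsSwitching F) :
    myPhi N S F ∈ N.arborsSpanning S := by
  have hPF : myPhi N S F ⊆ F := filter_subset _ _
  have hPE : myPhi N S F ⊆ N.E := hPF.trans hF.1
  rw [mem_arborsSpanning_iff]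
  refine ⟨hPE, ⟨hPE, ?_⟩, ?_, ?_⟩
  · intro v hv
    obtain ⟨e, he, hor⟩ := hv
    have hex : ∃ p₀, IsPath (myPhi N S F) N.root v p₀ := by
      obtain ⟨q, h1, h2⟩ := myPhi_path N hF he
      rcases hor with h | h
      · exact ⟨q, h ▸ h1⟩
      · exact ⟨q ++ [e], h ▸ h2⟩
    obtain ⟨p₀, hp₀⟩ := hex
    rw [card_eq_one]
    refine ⟨p₀, eq_singleton_iff_unique_mem.mpr ⟨(my_mem_allPaths_iff N hPE).mpr hp₀, ?_⟩⟩
    intro q hq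
    exact my_path_unique N hPE (my_UIn_subset (my_sw_UIn N hF) hPF) q.length le_rfl
      ((my_mem_allPaths_iff N hPE).mp hq) hp₀
  · intro x hx
    have hne : N.leafOf x ≠ N.root := by
      intro h
      have h1 := N.leaf_in x
      rw [h, N.root_in] at h1
      omega
    obtain ⟨e, heF, he2⟩ := my_sw_incoming N hF hne
    have hem : e ∈ myPhi N S F := (mem_myPhi N).mpr ⟨heF, x, hx, [], he2⟩
    exact ⟨e, hem, Or.inr he2⟩
  · intro v hv h0
    obtain ⟨e, he, hor⟩ := hv
    have hout : ∀ f ∈ myPhi N S F, f.1 ≠ v := by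
      intro f hf h1
      have : f ∈ (myPhi N S F).filter (fun g => g.1 = v) := mem_filter.mpr ⟨hf, h1⟩
      have hcp := card_pos.mpr ⟨f, this⟩
      rw [show ((myPhi N S F).filter (fun g => g.1 = v)).card = outDeg (myPhi N S F) v from rfl,
        h0] at hcp
      omega
    rcases hor with h | h
    · exact absurd h (hout e he)
    · obtain ⟨heF, x, hxS, p, hp⟩ := (mem_myPhi N).mp he
      match p, hp with
      | [], hp => exact ⟨x, hxS, by rw [← hp, h]⟩
      | f :: p', hp =>
          obtain ⟨hfF, hf1, hp'⟩ := hp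
          have : f ∈ myPhi N S F := (mem_myPhi N).mpr ⟨hfF, x, hxS, p', hp'⟩
          exact absurd (hf1.trans h) (hout f this)

lemma myPhi_eq_iff {S : Finset X} {F A : Finset (V × V)} (hF : N.IsSwitching F)
    (hA : A ∈ N.arborsSpanning S) : myPhi N S F = A ↔ A ⊆ F := by
  rw [mem_arborsSpanning_iff] at hA
  obtain ⟨hAE, hArb, hSp, hDead⟩ := hA
  constructor
  · rintro rfl; exact filter_subset _ _
  · intro hAF
    apply Finset.Subset.antisymm
    · intro e he
      obtain ⟨heF, x, hxS, p, hp⟩ := (mem_myPhi N).mp he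
      obtain ⟨q', hq'⟩ := my_sw_path_exists N hF e.1
      have hfull : IsPath F N.root (N.leafOf x) (q' ++ e :: p) :=
        isPath_append hq' ⟨heF, rfl, hp⟩
      obtain ⟨r, hr⟩ := my_arbor_path N hArb (hSp x hxS)
      have hrq : r = q' ++ e :: p :=
        my_path_unique N hF.1 (my_sw_UIn N hF) r.length le_rfl (isPath_mono hAF hr) hfull
      exact mem_of_isPath hr (by rw [hrq]; simp)
    · intro e heA
      obtain ⟨x, hxS, p, hp⟩ := my_reach_leaf N hAE hDead e.2 ⟨e, heA, Or.inr rfl⟩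
      exact (mem_myPhi N).mpr ⟨hAF heA, x, hxS, p, isPath_mono hAF hp⟩

end MyAux3
section MyAux4
variable {V X : Type*} [Fintype V] [DecidableEq V] [Fintype X] [DecidableEq X]
variable (N : PhyloNetwork V X)

noncomputable def freeR (A : Finset (V × V)) : Finset V :=
  Finset.univ.filter (fun v => inDeg N.E v = 2 ∧ ∀ e ∈ A, e.2 ≠ v)

lemma my_mem_displayed (hall : ∀ F, N.IsSwitching F → N.IsValidSwitching F)
    {F : Finset (V × V)} : F ∈ N.displayed ↔ N.IsSwitching F := by
  constructor
  · intro h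
    exact ((mem_filter.mp h).2).1
  · intro h
    exact mem_filter.mpr ⟨mem_powerset.mpr h.1, hall F h⟩

lemma my_sum_sw (hall : ∀ F, N.IsSwitching F → N.IsValidSwitching F) :
    ∀ (n : ℕ) (A : Finset (V × V)), (freeR N A).card = n → A ⊆ N.E → my_UIn A →
      ∑ F ∈ N.displayed.filter (fun F => A ⊆ F), N.Punsc F = N.Punsc A := by
  intro n
  induction n with
  | zero =>
      intro A hcard hAE hU
      have hfree : freeR N A = ∅ := card_eq_zero.mp hcard
      have hnofree : ∀ v, inDeg N.E v = 2 → ∃ e ∈ A, e.2 = v := by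
        intro v h2
        by_contra hc
        push_neg at hc
        have : v ∈ freeR N A := mem_filter.mpr ⟨mem_univ v, h2, hc⟩
        rw [hfree] at this
        simp at this
      set M : Finset (V × V) := N.E.filter (fun e => inDeg N.E e.2 = 1) with hM
      set F₀ : Finset (V × V) := A ∪ M with hF₀
      have hF₀E : F₀ ⊆ N.E := union_subset hAE (filter_subset _ _)
      have hF₀sw : N.IsSwitching F₀ := by
        refine ⟨hF₀E, ?_⟩
        intro v hv
        rcases my_indeg_cases N hv with h1 | h2
        · obtain ⟨m, hm⟩ := card_eq_one.mp h1
          have hmE : m ∈ N.E ∧ m.2 = v := mem_filter.mp (hm ▸ mem_singleton_self m)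
          have heq : F₀.filter (fun e => e.2 = v) = {m} := by
            apply Finset.Subset.antisymm
            · intro f hf
              rcases mem_filter.mp hf with ⟨hfF, hf2⟩
              have : f ∈ N.E.filter (fun e => e.2 = v) := mem_filter.mpr ⟨hF₀E hfF, hf2⟩
              rwa [hm] at this
            · intro f hf
              rw [mem_singleton] at hf
              subst hf
              refine mem_filter.mpr ⟨mem_union_right _ ?_, hmE.2⟩
              exact mem_filter.mpr ⟨hmE.1, by rw [hmE.2]; exact h1⟩
          rw [heq, card_singleton]
        · obtain ⟨e, heA, he2⟩ := hnofree v h2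
          have heq : F₀.filter (fun f => f.2 = v) = {e} := by
            apply Finset.Subset.antisymm
            · intro f hf
              rcases mem_filter.mp hf with ⟨hfF, hf2⟩
              rcases mem_union.mp hfF with hfA | hfM
              · rw [mem_singleton]
                exact hU f hfA e heA (by rw [hf2, he2])
              · exfalso
                have := (mem_filter.mp hfM).2
                rw [hf2, h2] at this
                omega
            · intro f hf
              rw [mem_singleton] at hf
              subst hf
              exact mem_filter.mpr ⟨mem_union_left _ heA, he2⟩
          rw [heq, card_singleton]
      have hset : N.displayed.filter (fun F => A ⊆ F) = {F₀} := by
        ext F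
        rw [mem_filter, mem_singleton]
        constructor
        · rintro ⟨hdisp, hAF⟩
          have hFsw : N.IsSwitching F := (my_mem_displayed N hall).mp hdisp
          apply Finset.Subset.antisymm
          · intro f hfF
            have hfE : f ∈ N.E := hFsw.1 hfF
            have hfroot : f.2 ≠ N.root := my_ne_root N hfE
            rcases my_indeg_cases N hfroot with h1 | h2
            · exact mem_union_right _ (mem_filter.mpr ⟨hfE, h1⟩)
            · obtain ⟨e, heA, he2⟩ := hnofree f.2 h2
              have : f = e := my_sw_UIn N hFsw f hfF e (hAF heA) he2.symm
              rw [this]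
              exact mem_union_left _ heA
          · refine union_subset hAF ?_
            intro m hmM
            rcases mem_filter.mp hmM with ⟨hmE, hm1⟩
            have hmr : m.2 ≠ N.root := my_ne_root N hmE
            obtain ⟨g, hgF, hg2⟩ := my_sw_incoming N hFsw hmr
            have hgE : g ∈ N.E := hFsw.1 hgF
            have : g = m := by
              have hcard1 : (N.E.filter (fun e => e.2 = m.2)).card ≤ 1 := hm1.le
              exact card_le_one.mp hcard1 g (mem_filter.mpr ⟨hgE, hg2⟩) m
                (mem_filter.mpr ⟨hmE, rfl⟩)
            rwa [← this]
        · rintro rfl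
          exact ⟨(my_mem_displayed N hall).mpr hF₀sw, subset_union_left⟩
      rw [hset, sum_singleton]
      unfold PhyloNetwork.Punsc
      rw [hF₀, filter_union]
      have hMempty : M.filter (fun e => inDeg N.E e.2 = 2) = ∅ := by
        rw [filter_eq_empty_iff]
        intro f hf
        have := (mem_filter.mp hf).2
        omega
      rw [hMempty, union_empty]
  | succ n ih =>
      intro A hcard hAE hU
      have hex : ∃ v, v ∈ freeR N A := card_pos.mp (by omega)
      obtain ⟨v, hv⟩ := hex
      rcases mem_filter.mp hv with ⟨-, hv2, hvfree⟩
      obtain ⟨e₁, e₂, hne, hpair⟩ := card_eq_two.mp hv2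
      have he₁ : e₁ ∈ N.E ∧ e₁.2 = v := mem_filter.mp (hpair ▸ mem_insert_self e₁ {e₂})
      have he₂ : e₂ ∈ N.E ∧ e₂.2 = v := mem_filter.mp
        (hpair ▸ mem_insert_of_mem (mem_singleton_self e₂))
      have key : ∀ e : V × V, e ∈ N.E → e.2 = v →
          (freeR N (insert e A)).card = n ∧ insert e A ⊆ N.E ∧ my_UIn (insert e A) ∧
            N.Punsc (insert e A) = N.prob e * N.Punsc A := by
        intro e heE he2
        have heA : e ∉ A := fun h => hvfree e h he2
        refine ⟨?_, insert_subset heE hAE, ?_, ?_⟩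
        · have : freeR N (insert e A) = (freeR N A).erase v := by
            ext w
            simp only [freeR, mem_erase, mem_filter, mem_univ, true_and, forall_mem_insert, he2]
            constructor
            · rintro ⟨h2, hvw, hAw⟩
              exact ⟨Ne.symm hvw, h2, hAw⟩
            · rintro ⟨hvw, h2, hAw⟩
              exact ⟨h2, Ne.symm hvw, hAw⟩
          have h' : (freeR N A).card - 1 = n := by omega
          rw [this, card_erase_of_mem hv, h']
        · intro f hf g hg h2
          rcases mem_insert.mp hf with rfl | hfA <;> rcases mem_insert.mp hg with rfl | hgA
          · rfl
          · exact absurd (h2.symm.trans he2) (hvfree g hgA)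
          · exact absurd (h2.trans he2) (hvfree f hfA)
          · exact hU f hfA g hgA h2
        · unfold PhyloNetwork.Punsc
          rw [filter_insert, if_pos (by rw [he2]; exact hv2)]
          rw [prod_insert (fun h => heA (mem_filter.mp h).1)]
      have hsplit : N.displayed.filter (fun F => A ⊆ F) =
          N.displayed.filter (fun F => insert e₁ A ⊆ F) ∪
            N.displayed.filter (fun F => insert e₂ A ⊆ F) := by
        ext F
        simp only [mem_filter, mem_union]
        constructor
        · rintro ⟨hdisp, hAF⟩
          have hFsw : N.IsSwitching F := (my_mem_displayed N hall).mp hdisp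
          have hvr : v ≠ N.root := he₁.2 ▸ my_ne_root N he₁.1
          obtain ⟨g, hgF, hg2⟩ := my_sw_incoming N hFsw hvr
          have : g ∈ N.E.filter (fun e => e.2 = v) := mem_filter.mpr ⟨hFsw.1 hgF, hg2⟩
          rw [hpair] at this
          rcases mem_insert.mp this with rfl | h
          · exact Or.inl ⟨hdisp, insert_subset hgF hAF⟩
          · rw [mem_singleton] at h
            subst h
            exact Or.inr ⟨hdisp, insert_subset hgF hAF⟩
        · rintro (⟨hdisp, hIF⟩ | ⟨hdisp, hIF⟩) <;>
            exact ⟨hdisp, (subset_insert _ _).trans hIF⟩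
      have hdisj : Disjoint (N.displayed.filter (fun F => insert e₁ A ⊆ F))
          (N.displayed.filter (fun F => insert e₂ A ⊆ F)) := by
        rw [disjoint_left]
        rintro F h₁ h₂
        rcases mem_filter.mp h₁ with ⟨hdisp, hI1⟩
        rcases mem_filter.mp h₂ with ⟨-, hI2⟩
        have hFsw : N.IsSwitching F := (my_mem_displayed N hall).mp hdisp
        exact hne (my_sw_UIn N hFsw e₁ (hI1 (mem_insert_self _ _)) e₂
          (hI2 (mem_insert_self _ _)) (he₁.2.trans he₂.2.symm))
      obtain ⟨hc1, hs1, hu1, hp1⟩ := key e₁ he₁.1 he₁.2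
      obtain ⟨hc2, hs2, hu2, hp2⟩ := key e₂ he₂.1 he₂.2
      rw [hsplit, sum_union hdisj, ih _ hc1 hs1 hu1, ih _ hc2 hs2 hu2, hp1, hp2]
      have hsum : N.prob e₁ + N.prob e₂ = 1 := by
        have := N.prob_sum v hv2
        rw [hpair, sum_pair hne] at this
        exact this
      rw [← add_mul, hsum, one_mul]

end MyAux4
/-- if every combination of reticulation-edge deletions yields a
phylogenetic `X`-tree (so `|T(N)| = 2 ^ k`), then the inheritance-weighted phylogenetic
net diversity (the probability-weighted average, suitably normalized, of the weights
of the arborescences spanning `S` and the root) equals the inheritance-weighted average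
embedded phylogenetic diversity. -/
theorem PNDinh_eq_weighted_embedded_PD {V X : Type*} [Fintype V] [DecidableEq V] [Fintype X] [DecidableEq X] (N : PhyloNetwork V X)
    (hall : ∀ F, N.IsSwitching F → N.IsValidSwitching F) (S : Finset X) :
    ∑ A ∈ N.arborsSpanning S,
        (N.Punsc A / ∑ B ∈ N.arborsSpanning S, N.Punsc B) * N.weight A
      = ∑ F ∈ N.displayed,
          (N.Punsc F / ∑ G ∈ N.displayed, N.Punsc G) * N.PDdisp F S := by
  classical
  have hmaps : ∀ F ∈ N.displayed, myPhi N S F ∈ N.arborsSpanning S := fun F hF =>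
    myPhi_arbS N ((my_mem_displayed N hall).mp hF)
  have hfiber : ∀ A ∈ N.arborsSpanning S,
      N.displayed.filter (fun F => myPhi N S F = A) =
        N.displayed.filter (fun F => A ⊆ F) := by
    intro A hA
    ext F
    simp only [mem_filter]
    constructor
    · rintro ⟨hFd, h⟩
      exact ⟨hFd, (myPhi_eq_iff N ((my_mem_displayed N hall).mp hFd) hA).mp h⟩
    · rintro ⟨hFd, h⟩
      exact ⟨hFd, (myPhi_eq_iff N ((my_mem_displayed N hall).mp hFd) hA).mpr h⟩
  have hfsum : ∀ A ∈ N.arborsSpanning S,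
      ∑ F ∈ N.displayed.filter (fun F => myPhi N S F = A), N.Punsc F = N.Punsc A := by
    intro A hA
    rw [hfiber A hA]
    rw [mem_arborsSpanning_iff] at hA
    exact my_sum_sw N hall _ A rfl hA.1 (my_arbor_UIn N hA.2.1)
  have key1 : ∑ F ∈ N.displayed, N.Punsc F = ∑ A ∈ N.arborsSpanning S, N.Punsc A := by
    rw [← sum_fiberwise_of_maps_to hmaps N.Punsc]
    exact sum_congr rfl hfsum
  have key2 : ∑ F ∈ N.displayed, N.Punsc F * N.PDdisp F S
      = ∑ A ∈ N.arborsSpanning S, N.Punsc A * N.weight A := by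
    rw [← sum_fiberwise_of_maps_to hmaps (fun F => N.Punsc F * N.PDdisp F S)]
    refine sum_congr rfl ?_
    intro A hA
    have hPD : ∀ F ∈ N.displayed.filter (fun F => myPhi N S F = A),
        N.PDdisp F S = N.weight A := by
      intro F hF
      rcases mem_filter.mp hF with ⟨hFd, hphi⟩
      rw [← hphi]
      rfl
    calc ∑ F ∈ N.displayed.filter (fun F => myPhi N S F = A), N.Punsc F * N.PDdisp F S
        = ∑ F ∈ N.displayed.filter (fun F => myPhi N S F = A), N.Punsc F * N.weight A :=
          sum_congr rfl (fun F hF => by rw [hPD F hF])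
      _ = (∑ F ∈ N.displayed.filter (fun F => myPhi N S F = A), N.Punsc F) * N.weight A := by
          rw [sum_mul]
      _ = N.Punsc A * N.weight A := by rw [hfsum A hA]
  have hL : ∑ A ∈ N.arborsSpanning S,
      (N.Punsc A / ∑ B ∈ N.arborsSpanning S, N.Punsc B) * N.weight A
      = (∑ A ∈ N.arborsSpanning S, N.Punsc A * N.weight A) /
          (∑ B ∈ N.arborsSpanning S, N.Punsc B) := by
    rw [sum_div]
    exact sum_congr rfl (fun A _ => by rw [div_mul_eq_mul_div])
  have hR : ∑ F ∈ N.displayed,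
      (N.Punsc F / ∑ G ∈ N.displayed, N.Punsc G) * N.PDdisp F S
      = (∑ F ∈ N.displayed, N.Punsc F * N.PDdisp F S) / (∑ G ∈ N.displayed, N.Punsc G) := by
    rw [sum_div]
    exact sum_congr rfl (fun F _ => by rw [div_mul_eq_mul_div])
  rw [hL, hR, key1, key2]
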